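/- Let G = (V, E) be a finite graph, M > 0, and define L(β) = M·Σ_{j∈V}(|β_j|_2 + |β_j − 1|_2) + Σ_{(u,v)∈E} |β_u + β_v − 1|_2 for β : V → ℤ_2 (2-adic integers). Let s : V → {0,1} be defined by s_j = β_j mod 2. Then L(s) ≤ L(β). -/
import Mathlib

lemma norm_one_of_toZMod_ne (x : ℤ_[2]) (h : PadicInt.toZMod x ≠ 0) : ‖x‖ = 1 := by
  refine le_antisymm (PadicInt.norm_le_one x) ?_
  by_contra hlt
  push_neg at hlt
  rw [PadicInt.norm_lt_one_iff_dvd] at hlt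
  exact h (by
    have : x ∈ RingHom.ker (PadicInt.toZMod : ℤ_[2] →+* ZMod 2) := by
      rw [PadicInt.ker_toZMod, PadicInt.maximalIdeal_eq_span_p, Ideal.mem_span_singleton]
      exact_mod_cast hlt
    exact this)

theorem stmt_8 (V : Type) [Fintype V] (E : Finset (V × V)) (M : ℝ) (hM : 0 < M)
    (β : V → ℤ_[2]) (s : V → ℚ)
    (hs : ∀ j, s j = ((PadicInt.toZMod (β j)).val : ℚ)) :
    M * ∑ j : V, (((padicNorm 2 (s j) : ℚ) : ℝ) + ((padicNorm 2 (s j - 1) : ℚ) : ℝ)) +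
      ∑ e ∈ E, ((padicNorm 2 (s e.1 + s e.2 - 1) : ℚ) : ℝ) ≤
    M * ∑ j : V, (‖β j‖ + ‖β j - 1‖) +
      ∑ e ∈ E, ‖β e.1 + β e.2 - 1‖ := by
  have hZ : ∀ x : ZMod 2, x = 0 ∨ x = 1 := by decide
  have hs0 : ∀ j, PadicInt.toZMod (β j) = 0 → s j = 0 := by
    intro j h; rw [hs j, h]; simp
  have hs1 : ∀ j, PadicInt.toZMod (β j) = 1 → s j = 1 := by
    intro j h; rw [hs j, h, ZMod.val_one]; simp
  refine add_le_add (mul_le_mul_of_nonneg_left (Finset.sum_le_sum ?_) hM.le)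
    (Finset.sum_le_sum ?_)
  · intro j _
    rcases hZ (PadicInt.toZMod (β j)) with h | h
    · have h1 : s j = 0 := hs0 j h
      have h2 : PadicInt.toZMod (β j - 1) ≠ 0 := by
        rw [map_sub, h, map_one]; decide
      have h3 : ‖β j - 1‖ = 1 := norm_one_of_toZMod_ne _ h2
      rw [h1, h3]
      have : padicNorm 2 ((0 : ℚ) - 1) = 1 := by
        rw [zero_sub, padicNorm.neg, padicNorm.one]
      rw [this]
      simp [norm_nonneg]
    · have h1 : s j = 1 := hs1 j h
      have h2 : PadicInt.toZMod (β j) ≠ 0 := by rw [h]; decide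
      have h3 : ‖β j‖ = 1 := norm_one_of_toZMod_ne _ h2
      rw [h1, h3]
      have : padicNorm 2 ((1 : ℚ) - 1) = 0 := by simp
      rw [this, padicNorm.one]
      simp [norm_nonneg]
  · intro e _
    rcases hZ (PadicInt.toZMod (β e.1)) with h | h <;>
      rcases hZ (PadicInt.toZMod (β e.2)) with h' | h'
    · have h2 : PadicInt.toZMod (β e.1 + β e.2 - 1) ≠ 0 := by
        rw [map_sub, map_add, h, h', map_one]; decide
      rw [norm_one_of_toZMod_ne _ h2, hs0 _ h, hs0 _ h']
      have : padicNorm 2 ((0 : ℚ) + 0 - 1) = 1 := by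
        norm_num [padicNorm.neg, padicNorm.one]
      rw [this]; norm_num
    · rw [hs0 _ h, hs1 _ h']
      have : padicNorm 2 ((0 : ℚ) + 1 - 1) = 0 := by norm_num
      rw [this]; exact_mod_cast norm_nonneg _
    · rw [hs1 _ h, hs0 _ h']
      have : padicNorm 2 ((1 : ℚ) + 0 - 1) = 0 := by norm_num
      rw [this]; exact_mod_cast norm_nonneg _
    · have h2 : PadicInt.toZMod (β e.1 + β e.2 - 1) ≠ 0 := by
        rw [map_sub, map_add, h, h', map_one]; decide
      rw [norm_one_of_toZMod_ne _ h2, hs1 _ h, hs1 _ h']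
      have : padicNorm 2 ((1 : ℚ) + 1 - 1) = 1 := by norm_num [padicNorm.one]
      rw [this]; norm_num
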